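/- Let X ⊆ ℝ^d be a nonempty closed convex set with metric projection P_X, and let f_1, …, f_n : ℝ^d → ℝ be differentiable, μ-strongly convex and L-smooth with 0 < μ ≤ L; set f = (1/n)Σ_l f_l and let x* be the unique minimizer of f over X. Let φ, φ', π ∈ ℝⁿ be positive stochastic vectors, let R be a row-stochastic n×n matrix with φ'ᵀR = φᵀ, let 0 < η < 1/(nL) and λ ∈ (0, 1], and let x_1, …, x_n, y_1, …, y_n ∈ ℝ^d satisfy Σ_l y_l = Σ_l ∇f_l(x_l). Define z_i = (1 − λ)x_i + λ P_X(x_i − η y_i) and x⁺_i = Σ_j R_{ij} z_j. Then √(Σ_i φ'_i ‖x⁺_i − x*‖²) ≤ q_π(η, λ)·√(Σ_i φ_i ‖x_i − x*‖²) + ηλL·√(n/min_i φ_i)·D(x, φ) + ηλ·S(y, π), where q_π(η, λ) = max_i (1 − λ·η n π_i·μ). -/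

import Mathlib

open Finset RealInnerProductSpace

/-- Consensus error `D(u, a) = √(Σ_i Σ_j a_i a_j ‖u_i − u_j‖²)`. -/
noncomputable def Derr {n d : ℕ} (a : Fin n → ℝ) (u : Fin n → EuclideanSpace ℝ (Fin d)) : ℝ :=
  Real.sqrt (∑ i, ∑ j, a i * a j * ‖u i - u j‖ ^ 2)

/-- Gradient-tracking error `S(y, a) = √(Σ_i a_i ‖y_i/a_i − Σ_l y_l‖²)`. -/
noncomputable def Serr {n d : ℕ} (a : Fin n → ℝ) (y : Fin n → EuclideanSpace ℝ (Fin d)) : ℝ :=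
  Real.sqrt (∑ i, a i * ‖(a i)⁻¹ • y i - (∑ l, y l)‖ ^ 2)

/-- Minimum entry of a vector over `Fin n`, `n ≠ 0`. -/
noncomputable def fmin {n : ℕ} [NeZero n] (a : Fin n → ℝ) : ℝ :=
  Finset.univ.inf' Finset.univ_nonempty a

/-- `q_π(η, λ) = max_i (1 − λ·ηnπ_i·μ)`. -/
noncomputable def qmax {n : ℕ} [NeZero n] (π : Fin n → ℝ) (μ η lam : ℝ) : ℝ :=
  Finset.univ.sup' Finset.univ_nonempty (fun i => 1 - lam * (η * n * π i) * μ)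

section Helpers

variable {E : Type*} [NormedAddCommGroup E] [InnerProductSpace ℝ E] [CompleteSpace E]

lemma my_hasGradientAt_sum {ι : Type*} (s : Finset ι) (f : ι → E → ℝ) (x : E)
    (hf : ∀ i ∈ s, DifferentiableAt ℝ (f i) x) :
    HasGradientAt (fun v => ∑ i ∈ s, f i v) (∑ i ∈ s, gradient (f i) x) x := by
  rw [hasGradientAt_iff_hasFDerivAt, map_sum]
  exact HasFDerivAt.fun_sum (fun i hi => ((hf i hi).hasGradientAt).hasFDerivAt)

lemma my_line_deriv (h : E → ℝ) (hd : Differentiable ℝ h) (a b : E) (t : ℝ) :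
    HasDerivAt (fun t : ℝ => h (a + t • (b - a))) ⟪gradient h (a + t • (b - a)), b - a⟫ t := by
  have hγ : HasDerivAt (fun t : ℝ => a + t • (b - a)) (b - a) t := by
    simpa using ((hasDerivAt_id t).smul_const (b - a)).const_add a
  have hg := (hd (a + t • (b - a))).hasGradientAt.hasFDerivAt
  have := hg.comp_hasDerivAt t hγ
  simpa [Function.comp_def] using this

lemma my_lower_quad (h : E → ℝ) (hd : Differentiable ℝ h) (c : ℝ)
    (hc : ∀ u v : E, c * ‖u - v‖ ^ 2 ≤ ⟪gradient h u - gradient h v, u - v⟫) (a b : E) :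
    h a + ⟪gradient h a, b - a⟫ + c / 2 * ‖b - a‖ ^ 2 ≤ h b := by
  set γ : ℝ → E := fun t => a + t • (b - a) with hγdef
  set χ : ℝ → ℝ := fun t => h (γ t) - t * ⟪gradient h a, b - a⟫ - c / 2 * t ^ 2 * ‖b - a‖ ^ 2
    with hχdef
  have hχd : ∀ t : ℝ, HasDerivAt χ
      (⟪gradient h (γ t), b - a⟫ - ⟪gradient h a, b - a⟫ - c * t * ‖b - a‖ ^ 2) t := by
    intro t
    have h1 := my_line_deriv h hd a b t
    have h2 : HasDerivAt (fun t : ℝ => t * ⟪gradient h a, b - a⟫)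
        ⟪gradient h a, b - a⟫ t := by simpa using (hasDerivAt_id t).mul_const _
    have h3 : HasDerivAt (fun t : ℝ => c / 2 * t ^ 2 * ‖b - a‖ ^ 2)
        (c * t * ‖b - a‖ ^ 2) t := by
      have := ((hasDerivAt_pow 2 t).const_mul (c / 2)).mul_const (‖b - a‖ ^ 2)
      exact this.congr_deriv (by push_cast; ring)
    exact (h1.sub h2).sub h3
  have hmono : MonotoneOn χ (Set.Icc (0:ℝ) 1) := by
    apply monotoneOn_of_deriv_nonneg (convex_Icc 0 1)
    · exact (fun t _ => ((hχd t).continuousAt.continuousWithinAt))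
    · intro t ht
      exact ((hχd t).differentiableAt).differentiableWithinAt
    · intro t ht
      rw [interior_Icc] at ht
      rw [(hχd t).deriv]
      have key : c * t * ‖b - a‖ ^ 2 ≤ ⟪gradient h (γ t) - gradient h a, b - a⟫ := by
        have h4 := hc (γ t) a
        have h5 : γ t - a = t • (b - a) := by simp [hγdef]
        rw [h5] at h4
        have h6 : ⟪gradient h (γ t) - gradient h a, t • (b - a)⟫
            = t * ⟪gradient h (γ t) - gradient h a, b - a⟫ := real_inner_smul_right _ _ _
        rw [norm_smul, mul_pow, h6] at h4
        have ht0 : 0 < t := ht.1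
        rw [Real.norm_eq_abs, sq_abs] at h4
        have h4' : c * t * ‖b - a‖ ^ 2 * t
            ≤ ⟪gradient h (γ t) - gradient h a, b - a⟫ * t := by nlinarith [h4]
        exact le_of_mul_le_mul_right h4' ht0
      have h7 : ⟪gradient h (γ t) - gradient h a, b - a⟫
          = ⟪gradient h (γ t), b - a⟫ - ⟪gradient h a, b - a⟫ := inner_sub_left _ _ _
      linarith [key, h7.symm.le, h7.le]
  have h01 := hmono (Set.mem_Icc.2 ⟨le_refl 0, zero_le_one⟩)
    (Set.mem_Icc.2 ⟨zero_le_one, le_refl 1⟩) zero_le_one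
  have hγ0 : γ 0 = a := by simp [hγdef]
  have hγ1 : γ 1 = b := by simp [hγdef]
  simp only [hχdef, hγ0, hγ1] at h01
  nlinarith [h01]


lemma my_upper_quad (h : E → ℝ) (hd : Differentiable ℝ h) (Mc : ℝ)
    (hMc : ∀ u v : E, ⟪gradient h u - gradient h v, u - v⟫ ≤ Mc * ‖u - v‖ ^ 2) (a b : E) :
    h b ≤ h a + ⟪gradient h a, b - a⟫ + Mc / 2 * ‖b - a‖ ^ 2 := by
  have hneg : ∀ x : E, gradient (fun v => -(h v)) x = -(gradient h x) := by
    intro x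
    have : HasGradientAt (fun v => -(h v)) (-(gradient h x)) x := by
      rw [hasGradientAt_iff_hasFDerivAt, map_neg]
      exact ((hd x).hasGradientAt.hasFDerivAt).neg
    exact this.gradient
  have hc : ∀ u v : E, (-Mc) * ‖u - v‖ ^ 2
      ≤ ⟪gradient (fun v => -(h v)) u - gradient (fun v => -(h v)) v, u - v⟫ := by
    intro u v
    rw [hneg, hneg]
    have : (-(gradient h u)) - (-(gradient h v)) = -(gradient h u - gradient h v) := by abel
    rw [this, inner_neg_left]
    linarith [hMc u v]
  have := my_lower_quad (fun v => -(h v)) (hd.neg) (-Mc) hc a b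
  simp only [hneg] at this
  rw [inner_neg_left] at this
  linarith [this]

lemma my_interp (h : E → ℝ) (hd : Differentiable ℝ h) (m M : ℝ) (hm : 0 < m) (hmM : m ≤ M)
    (hmono : ∀ u v : E, m * ‖u - v‖ ^ 2 ≤ ⟪gradient h u - gradient h v, u - v⟫)
    (hlip : ∀ u v : E, ‖gradient h u - gradient h v‖ ≤ M * ‖u - v‖) (u v : E) :
    ‖gradient h u - gradient h v‖ ^ 2 + m * M * ‖u - v‖ ^ 2
      ≤ (m + M) * ⟪gradient h u - gradient h v, u - v⟫ := by
  rcases eq_or_lt_of_le hmM with heq | hlt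
  · subst heq
    have h1 := hmono u v
    have h2 := hlip u v
    have h3 : ‖gradient h u - gradient h v‖ ^ 2 ≤ m ^ 2 * ‖u - v‖ ^ 2 := by
      have := mul_le_mul h2 h2 (norm_nonneg _) (by positivity)
      nlinarith [this]
    nlinarith [h1, h3, hm]
  · have hK0 : (0:ℝ) < M - m := by linarith
    have hMc : ∀ a b : E, ⟪gradient h a - gradient h b, a - b⟫ ≤ M * ‖a - b‖ ^ 2 := by
      intro a b
      calc ⟪gradient h a - gradient h b, a - b⟫ ≤ ‖gradient h a - gradient h b‖ * ‖a - b‖ :=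
            real_inner_le_norm _ _
        _ ≤ M * ‖a - b‖ * ‖a - b‖ := by
            have := mul_le_mul_of_nonneg_right (hlip a b) (norm_nonneg (a - b))
            linarith [this]
        _ = M * ‖a - b‖ ^ 2 := by ring
    have key : ∀ a b : E,
        h a - h b + ⟪gradient h a, b - a⟫ + m / 2 * ‖b - a‖ ^ 2
          + (2 * (M - m))⁻¹ * ‖m • (a - b) - (gradient h a - gradient h b)‖ ^ 2 ≤ 0 := by
      intro a b
      set ga := gradient h a with hga
      set gb := gradient h b with hgb
      set r := m • (a - b) - (ga - gb) with hr
      set w := b - (M - m)⁻¹ • r with hw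
      have lo := my_lower_quad h hd m hmono a w
      have up := my_upper_quad h hd M hMc b w
      rw [← hga] at lo
      rw [← hgb] at up
      have hwb : w - b = -((M - m)⁻¹ • r) := by rw [hw]; abel
      have hwa : w - a = (b - a) - (M - m)⁻¹ • r := by rw [hw]; abel
      have e1 : ‖w - b‖ ^ 2 = (M - m)⁻¹ ^ 2 * ‖r‖ ^ 2 := by
        rw [hwb, norm_neg, norm_smul, mul_pow, Real.norm_eq_abs, sq_abs]
      have e2 : ‖w - a‖ ^ 2 = ‖b - a‖ ^ 2 - 2 * (M - m)⁻¹ * ⟪b - a, r⟫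
          + (M - m)⁻¹ ^ 2 * ‖r‖ ^ 2 := by
        rw [hwa, norm_sub_sq_real, norm_smul, mul_pow, Real.norm_eq_abs, sq_abs,
          real_inner_smul_right]
        ring
      have e3 : ⟪ga, w - a⟫ = ⟪ga, b - a⟫ - (M - m)⁻¹ * ⟪ga, r⟫ := by
        rw [hwa, inner_sub_right, real_inner_smul_right]
      have e4 : ⟪gb, w - b⟫ = -((M - m)⁻¹ * ⟪gb, r⟫) := by
        rw [hwb, inner_neg_right, real_inner_smul_right]
      have e5 : ⟪ga, r⟫ - ⟪gb, r⟫ = ⟪ga - gb, r⟫ := (inner_sub_left _ _ _).symm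
      have e6 : ⟪ga - gb, r⟫ = m * ⟪ga - gb, a - b⟫ - ‖ga - gb‖ ^ 2 := by
        rw [hr, inner_sub_right, real_inner_smul_right, real_inner_self_eq_norm_sq]
      have e7 : ⟪b - a, r⟫ = -(m * ‖a - b‖ ^ 2) + ⟪ga - gb, a - b⟫ := by
        have c1 : ⟪b - a, r⟫ = -⟪a - b, r⟫ := by
          rw [← inner_neg_left]; congr 1; abel
        have c2 : ⟪a - b, r⟫ = m * ‖a - b‖ ^ 2 - ⟪a - b, ga - gb⟫ := by
          rw [hr, inner_sub_right, real_inner_smul_right, real_inner_self_eq_norm_sq]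
        have c3 : ⟪a - b, ga - gb⟫ = ⟪ga - gb, a - b⟫ := real_inner_comm _ _
        rw [c1, c2, c3]; ring
      have e8 : ‖r‖ ^ 2 = m ^ 2 * ‖a - b‖ ^ 2 - 2 * m * ⟪ga - gb, a - b⟫
          + ‖ga - gb‖ ^ 2 := by
        rw [hr, norm_sub_sq_real, norm_smul, mul_pow, Real.norm_eq_abs, sq_abs,
          real_inner_smul_left, real_inner_comm]
        ring
      have hab : ‖a - b‖ = ‖b - a‖ := norm_sub_rev a b
      rw [e3, e2] at lo
      rw [e4, e1] at up
      have expand : (M - m)⁻¹ * ⟪ga, r⟫ - (M - m)⁻¹ * ⟪gb, r⟫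
          + m * (M - m)⁻¹ * ⟪b - a, r⟫ + (M - m)⁻¹ * ‖r‖ ^ 2 = 0 := by
        linear_combination (M - m)⁻¹ * e5 + (M - m)⁻¹ * e6 + m * (M - m)⁻¹ * e7
          + (M - m)⁻¹ * e8
      have idK : M / 2 * ((M - m)⁻¹ ^ 2 * ‖r‖ ^ 2) - m / 2 * ((M - m)⁻¹ ^ 2 * ‖r‖ ^ 2)
          - (M - m)⁻¹ * ‖r‖ ^ 2 = -((2 * (M - m))⁻¹ * ‖r‖ ^ 2) := by
        have hne : M - m ≠ 0 := ne_of_gt hK0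
        field_simp
        ring
      linarith [lo, up, expand, idK]
    have k1 := key u v
    have k2 := key v u
    set gu := gradient h u with hgu
    set gv := gradient h v with hgv
    have s1 : ‖m • (v - u) - (gv - gu)‖ ^ 2 = ‖m • (u - v) - (gu - gv)‖ ^ 2 := by
      have hs : m • (v - u) - (gv - gu) = -(m • (u - v) - (gu - gv)) := by
        rw [smul_sub, smul_sub]; abel
      rw [hs, norm_neg]
    have s3 : ‖v - u‖ = ‖u - v‖ := norm_sub_rev v u
    rw [s1] at k2
    have s2 : ⟪gu, v - u⟫ + ⟪gv, u - v⟫ = -⟪gu - gv, u - v⟫ := by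
      have t1 : ⟪gu, v - u⟫ = -⟪gu, u - v⟫ := by
        rw [← inner_neg_right]; congr 1; abel
      have t2 : ⟪gu - gv, u - v⟫ = ⟪gu, u - v⟫ - ⟪gv, u - v⟫ := inner_sub_left _ _ _
      rw [t1, t2]; ring
    rw [s3] at k1
    have add : m * ‖u - v‖ ^ 2 - ⟪gu - gv, u - v⟫
        + 2 * ((2 * (M - m))⁻¹ * ‖m • (u - v) - (gu - gv)‖ ^ 2) ≤ 0 := by
      linarith [k1, k2, s2]
    have e8' : ‖m • (u - v) - (gu - gv)‖ ^ 2
        = m ^ 2 * ‖u - v‖ ^ 2 - 2 * m * ⟪gu - gv, u - v⟫ + ‖gu - gv‖ ^ 2 := by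
      rw [norm_sub_sq_real, norm_smul, mul_pow, Real.norm_eq_abs, sq_abs,
        real_inner_smul_left, real_inner_comm]
      ring
    have hmulK : (M - m) * (2 * ((2 * (M - m))⁻¹ * ‖m • (u - v) - (gu - gv)‖ ^ 2))
        = ‖m • (u - v) - (gu - gv)‖ ^ 2 := by
      have hne : M - m ≠ 0 := ne_of_gt hK0
      field_simp
    have hmul := mul_le_mul_of_nonneg_left add (le_of_lt hK0)
    rw [mul_zero] at hmul
    rw [mul_add, mul_sub, hmulK] at hmul
    rw [e8'] at hmul
    nlinarith [hmul]


lemma my_contraction (h : E → ℝ) (hd : Differentiable ℝ h) (m M : ℝ) (hm : 0 < m) (hmM : m ≤ M)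
    (hmono : ∀ u v : E, m * ‖u - v‖ ^ 2 ≤ ⟪gradient h u - gradient h v, u - v⟫)
    (hlip : ∀ u v : E, ‖gradient h u - gradient h v‖ ≤ M * ‖u - v‖)
    (s : ℝ) (hs0 : 0 ≤ s) (hs2 : s * (m + M) ≤ 2) (u v : E) :
    ‖(u - v) - s • (gradient h u - gradient h v)‖ ≤ (1 - s * m) * ‖u - v‖ := by
  have interp := my_interp h hd m M hm hmM hmono hlip u v
  set g := gradient h u - gradient h v with hg
  set w := u - v with hwdef
  have hgw : m * ‖w‖ ^ 2 ≤ ⟪g, w⟫ := hmono u v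
  have hg2 : m ^ 2 * ‖w‖ ^ 2 ≤ ‖g‖ ^ 2 := by
    rcases eq_or_lt_of_le (norm_nonneg w) with h0 | h0
    · rw [← h0]; simp
    · have h1 : ⟪g, w⟫ ≤ ‖g‖ * ‖w‖ := real_inner_le_norm _ _
      have h2 : m * ‖w‖ * ‖w‖ ≤ ‖g‖ * ‖w‖ := by nlinarith [hgw]
      have h3 : m * ‖w‖ ≤ ‖g‖ := le_of_mul_le_mul_right h2 h0
      nlinarith [h3, norm_nonneg w, hm]
  have hsm : s * m ≤ 1 := by nlinarith [hs0, hs2, hm, hmM, mul_le_mul_of_nonneg_left hmM hs0]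
  have expand : ‖w - s • g‖ ^ 2 = ‖w‖ ^ 2 - 2 * s * ⟪g, w⟫ + s ^ 2 * ‖g‖ ^ 2 := by
    rw [norm_sub_sq_real, norm_smul, mul_pow, Real.norm_eq_abs, sq_abs,
      real_inner_smul_right, real_inner_comm]
    ring
  have hMm : (0:ℝ) < m + M := by linarith
  have p1 : 0 ≤ s * ((m + M) * ⟪g, w⟫ - (‖g‖ ^ 2 + m * M * ‖w‖ ^ 2)) :=
    mul_nonneg hs0 (by linarith [interp])
  have p2 : 0 ≤ s * ((2 - s * (m + M)) * (‖g‖ ^ 2 - m ^ 2 * ‖w‖ ^ 2)) :=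
    mul_nonneg hs0 (mul_nonneg (by linarith) (by linarith [hg2]))
  have hd2 : 0 ≤ (m + M) *
      (((1 - s * m) * ‖w‖) ^ 2 - (‖w‖ ^ 2 - 2 * s * ⟪g, w⟫ + s ^ 2 * ‖g‖ ^ 2)) := by
    nlinarith [p1, p2]
  have hsq : ‖w - s • g‖ ^ 2 ≤ ((1 - s * m) * ‖w‖) ^ 2 := by nlinarith [hd2, hMm, expand]
  calc ‖w - s • g‖ = Real.sqrt (‖w - s • g‖ ^ 2) := (Real.sqrt_sq (norm_nonneg _)).symm
    _ ≤ Real.sqrt (((1 - s * m) * ‖w‖) ^ 2) := Real.sqrt_le_sqrt hsq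
    _ = (1 - s * m) * ‖w‖ := Real.sqrt_sq (mul_nonneg (by linarith [hsm]) (norm_nonneg w))

lemma my_minkowski {ι : Type*} (s : Finset ι) (a b c : ι → ℝ) (ha : ∀ i, 0 ≤ a i) :
    Real.sqrt (∑ i ∈ s, a i * (b i + c i) ^ 2)
      ≤ Real.sqrt (∑ i ∈ s, a i * b i ^ 2) + Real.sqrt (∑ i ∈ s, a i * c i ^ 2) := by
  set B := Real.sqrt (∑ i ∈ s, a i * b i ^ 2) with hB
  set C := Real.sqrt (∑ i ∈ s, a i * c i ^ 2) with hC
  have hBnn : 0 ≤ B := Real.sqrt_nonneg _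
  have hCnn : 0 ≤ C := Real.sqrt_nonneg _
  have hBsq : B ^ 2 = ∑ i ∈ s, a i * b i ^ 2 :=
    Real.sq_sqrt (Finset.sum_nonneg fun i _ => mul_nonneg (ha i) (sq_nonneg _))
  have hCsq : C ^ 2 = ∑ i ∈ s, a i * c i ^ 2 :=
    Real.sq_sqrt (Finset.sum_nonneg fun i _ => mul_nonneg (ha i) (sq_nonneg _))
  have hcross := Real.sum_mul_le_sqrt_mul_sqrt s
    (fun i => Real.sqrt (a i) * b i) (fun i => Real.sqrt (a i) * c i)
  have e1 : ∀ i ∈ s, Real.sqrt (a i) * b i * (Real.sqrt (a i) * c i) = a i * (b i * c i) := by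
    intro i _
    linear_combination (b i * c i) * Real.mul_self_sqrt (ha i)
  have e2 : ∀ i ∈ s, (Real.sqrt (a i) * b i) ^ 2 = a i * b i ^ 2 := by
    intro i _
    rw [mul_pow, Real.sq_sqrt (ha i)]
  have e3 : ∀ i ∈ s, (Real.sqrt (a i) * c i) ^ 2 = a i * c i ^ 2 := by
    intro i _
    rw [mul_pow, Real.sq_sqrt (ha i)]
  rw [Finset.sum_congr rfl e1, Finset.sum_congr rfl e2, Finset.sum_congr rfl e3] at hcross
  rw [← hB, ← hC] at hcross
  have expand : ∑ i ∈ s, a i * (b i + c i) ^ 2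
      = (∑ i ∈ s, a i * b i ^ 2) + 2 * (∑ i ∈ s, a i * (b i * c i))
        + (∑ i ∈ s, a i * c i ^ 2) := by
    rw [Finset.mul_sum, ← Finset.sum_add_distrib, ← Finset.sum_add_distrib]
    exact Finset.sum_congr rfl fun i _ => by ring
  have hle : ∑ i ∈ s, a i * (b i + c i) ^ 2 ≤ (B + C) ^ 2 := by
    rw [expand]
    nlinarith [hcross, hBsq, hCsq]
  calc Real.sqrt (∑ i ∈ s, a i * (b i + c i) ^ 2) ≤ Real.sqrt ((B + C) ^ 2) :=
        Real.sqrt_le_sqrt hle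
    _ = B + C := Real.sqrt_sq (by positivity)

lemma my_jensen_sq {ι : Type*} (s : Finset ι) (r t : ι → ℝ) (hr : ∀ i, 0 ≤ r i)
    (hrs : ∑ i ∈ s, r i = 1) :
    (∑ i ∈ s, r i * t i) ^ 2 ≤ ∑ i ∈ s, r i * t i ^ 2 := by
  have key := sum_mul_sq_le_sq_mul_sq s (fun i => Real.sqrt (r i))
    (fun i => Real.sqrt (r i) * t i)
  have e1 : ∀ i ∈ s, Real.sqrt (r i) * (Real.sqrt (r i) * t i) = r i * t i := by
    intro i _
    rw [← mul_assoc, Real.mul_self_sqrt (hr i)]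
  have e2 : ∀ i ∈ s, (Real.sqrt (r i)) ^ 2 = r i := fun i _ => Real.sq_sqrt (hr i)
  have e3 : ∀ i ∈ s, (Real.sqrt (r i) * t i) ^ 2 = r i * t i ^ 2 := by
    intro i _
    rw [mul_pow, Real.sq_sqrt (hr i)]
  rw [Finset.sum_congr rfl e1, Finset.sum_congr rfl e2, Finset.sum_congr rfl e3, hrs,
    one_mul] at key
  exact key

lemma my_proj_var (X : Set E) (hXconvex : Convex ℝ X)
    (P : E → E) (hPmem : ∀ v, P v ∈ X) (hPproj : ∀ v, ∀ u ∈ X, ‖v - P v‖ ≤ ‖v - u‖)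
    (v : E) : ∀ u ∈ X, ⟪v - P v, u - P v⟫ ≤ 0 := by
  haveI : Nonempty X := ⟨⟨P v, hPmem v⟩⟩
  have hinf : ‖v - P v‖ = ⨅ w : X, ‖v - w‖ := by
    apply le_antisymm
    · exact le_ciInf fun w => hPproj v w w.2
    · exact ciInf_le (f := fun w : X => ‖v - (w : E)‖)
        ⟨(0:ℝ), by rintro _ ⟨w, rfl⟩; exact norm_nonneg _⟩ ⟨P v, hPmem v⟩
  exact (norm_eq_iInf_iff_real_inner_le_zero hXconvex (hPmem v)).1 hinf

lemma my_nonexp (X : Set E) (hXconvex : Convex ℝ X)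
    (P : E → E) (hPmem : ∀ v, P v ∈ X) (hPproj : ∀ v, ∀ u ∈ X, ‖v - P v‖ ≤ ‖v - u‖)
    (a b : E) : ‖P a - P b‖ ≤ ‖a - b‖ := by
  have h1 := my_proj_var X hXconvex P hPmem hPproj a (P b) (hPmem b)
  have h2 := my_proj_var X hXconvex P hPmem hPproj b (P a) (hPmem a)
  have key : ‖P a - P b‖ ^ 2 ≤ ⟪a - b, P a - P b⟫ := by
    have e1 : ⟪a - P a, P b - P a⟫ = -⟪a - P a, P a - P b⟫ := by
      rw [← inner_neg_right]; congr 1; abel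
    have e2 : ⟪b - P b, P a - P b⟫ ≤ 0 := h2
    have e3 : ⟪a - b, P a - P b⟫
        = ⟪a - P a, P a - P b⟫ - ⟪b - P b, P a - P b⟫ + ⟪P a - P b, P a - P b⟫ := by
      rw [← inner_sub_left, ← inner_add_left]
      congr 1
      abel
    rw [e3, real_inner_self_eq_norm_sq]
    linarith [h1, e1, e2]
  have h4 : ⟪a - b, P a - P b⟫ ≤ ‖a - b‖ * ‖P a - P b‖ := real_inner_le_norm _ _
  rcases eq_or_lt_of_le (norm_nonneg (P a - P b)) with h0 | h0
  · rw [← h0]; exact norm_nonneg _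
  · have : ‖P a - P b‖ * ‖P a - P b‖ ≤ ‖a - b‖ * ‖P a - P b‖ := by nlinarith [key, h4]
    exact le_of_mul_le_mul_right this h0

lemma my_fix (X : Set E) (hXconvex : Convex ℝ X)
    (P : E → E) (hPmem : ∀ v, P v ∈ X) (hPproj : ∀ v, ∀ u ∈ X, ‖v - P v‖ ≤ ‖v - u‖)
    (xs : E) (hxs : xs ∈ X) (c : E) (hc : ∀ u ∈ X, ⟪c - xs, u - xs⟫ ≤ 0) : P c = xs := by
  have h1 : ‖c - P c‖ ≤ ‖c - xs‖ := hPproj c xs hxs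
  have h2 : ⟪c - xs, P c - xs⟫ ≤ 0 := hc (P c) (hPmem c)
  have e1 : ‖c - P c‖ ^ 2 = ‖c - xs‖ ^ 2 - 2 * ⟪c - xs, P c - xs⟫ + ‖P c - xs‖ ^ 2 := by
    have : c - P c = (c - xs) - (P c - xs) := by abel
    rw [this, norm_sub_sq_real]
  have h3 : ‖P c - xs‖ ^ 2 ≤ 0 := by nlinarith [h1, h2, e1, norm_nonneg (c - P c), norm_nonneg (c - xs)]
  have h4 : ‖P c - xs‖ = 0 := by nlinarith [norm_nonneg (P c - xs), h3]
  exact norm_sub_eq_zero_iff.1 h4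

end Helpers

set_option maxHeartbeats 3000000 in
/-- Optimality gap bound, Lemma `optimality-gap`. One step of Projected
Push-Pull consensus and lazy projected-gradient update satisfies
`‖x⁺ − x*‖_{φ'} ≤ q_π(η,λ)·‖x − x*‖_φ + ηλL√(n/min φ)·D(x, φ) + ηλ·S(y, π)`. -/
theorem optimality_gap_bound {n d : ℕ} [NeZero n]
    (X : Set (EuclideanSpace ℝ (Fin d))) (hXne : X.Nonempty)
    (hXclosed : IsClosed X) (hXconvex : Convex ℝ X)
    (P : EuclideanSpace ℝ (Fin d) → EuclideanSpace ℝ (Fin d))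
    (hPmem : ∀ v, P v ∈ X)
    (hPproj : ∀ v, ∀ u ∈ X, ‖v - P v‖ ≤ ‖v - u‖)
    (f : Fin n → EuclideanSpace ℝ (Fin d) → ℝ)
    (hfdiff : ∀ i, Differentiable ℝ (f i))
    (μ L : ℝ) (hμ : 0 < μ) (hμL : μ ≤ L)
    (hstrong : ∀ i u v, μ * ‖u - v‖ ^ 2 ≤ ⟪gradient (f i) u - gradient (f i) v, u - v⟫)
    (hsmooth : ∀ i u v, ‖gradient (f i) u - gradient (f i) v‖ ≤ L * ‖u - v‖)
    (F : EuclideanSpace ℝ (Fin d) → ℝ)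
    (hF : F = fun v => (1 / (n : ℝ)) * ∑ l, f l v)
    (xs : EuclideanSpace ℝ (Fin d)) (hxsmem : xs ∈ X)
    (hxsmin : ∀ u ∈ X, F xs ≤ F u)
    (hxsuniq : ∀ u ∈ X, (∀ v ∈ X, F u ≤ F v) → u = xs)
    (φ φ' π : Fin n → ℝ)
    (hφpos : ∀ i, 0 < φ i) (hφsum : ∑ i, φ i = 1)
    (hφ'pos : ∀ i, 0 < φ' i) (hφ'sum : ∑ i, φ' i = 1)
    (hπpos : ∀ i, 0 < π i) (hπsum : ∑ i, π i = 1)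
    (R : Fin n → Fin n → ℝ)
    (hRnonneg : ∀ i j, 0 ≤ R i j) (hRrow : ∀ i, ∑ j, R i j = 1)
    (hφR : ∀ j, ∑ i, φ' i * R i j = φ j)
    (η lam : ℝ) (hη0 : 0 < η) (hη : η < 1 / (n * L)) (hlam0 : 0 < lam) (hlam1 : lam ≤ 1)
    (x y : Fin n → EuclideanSpace ℝ (Fin d))
    (htrack : ∑ l, y l = ∑ l, gradient (f l) (x l))
    (z xplus : Fin n → EuclideanSpace ℝ (Fin d))
    (hz : ∀ i, z i = (1 - lam) • x i + lam • P (x i - η • y i))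
    (hxplus : ∀ i, xplus i = ∑ j, R i j • z j) :
    Real.sqrt (∑ i, φ' i * ‖xplus i - xs‖ ^ 2)
      ≤ qmax π μ η lam * Real.sqrt (∑ i, φ i * ‖x i - xs‖ ^ 2)
        + η * lam * L * Real.sqrt ((n : ℝ) / fmin φ) * Derr φ x
        + η * lam * Serr π y := by
  classical
  -- basic numeric facts
  have hL0 : 0 < L := lt_of_lt_of_le hμ hμL
  have hn1 : (1:ℝ) ≤ (n:ℝ) := by
    have := Nat.one_le_iff_ne_zero.2 (NeZero.ne n)
    exact_mod_cast this
  have hn0 : (0:ℝ) < (n:ℝ) := lt_of_lt_of_le one_pos hn1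
  have hnL : (0:ℝ) < (n:ℝ) * L := mul_pos hn0 hL0
  have hηnL : η * ((n:ℝ) * L) < 1 := by
    have := (lt_div_iff₀ hnL).1 hη
    linarith
  have hπle1 : ∀ i, π i ≤ 1 := by
    intro i
    rw [← hπsum]
    exact Finset.single_le_sum (f := π) (fun j _ => le_of_lt (hπpos j)) (Finset.mem_univ i)
  have hφle1 : ∀ i, φ i ≤ 1 := by
    intro i
    rw [← hφsum]
    exact Finset.single_le_sum (f := φ) (fun j _ => le_of_lt (hφpos j)) (Finset.mem_univ i)
  -- the aggregate function
  set h : EuclideanSpace ℝ (Fin d) → ℝ := fun v => ∑ l, f l v with hh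
  have hdh : Differentiable ℝ h := by
    intro v
    exact (my_hasGradientAt_sum Finset.univ f v
      (fun l _ => (hfdiff l).differentiableAt)).differentiableAt
  have hgrad : ∀ v, gradient h v = ∑ l, gradient (f l) v := fun v =>
    (my_hasGradientAt_sum Finset.univ f v (fun l _ => (hfdiff l).differentiableAt)).gradient
  have hmono_h : ∀ u v, ((n:ℝ) * μ) * ‖u - v‖ ^ 2
      ≤ ⟪gradient h u - gradient h v, u - v⟫ := by
    intro u v
    rw [hgrad, hgrad, ← Finset.sum_sub_distrib, sum_inner]
    have e : ((n:ℝ) * μ) * ‖u - v‖ ^ 2 = ∑ _l : Fin n, μ * ‖u - v‖ ^ 2 := by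
      rw [Finset.sum_const, Finset.card_univ, Fintype.card_fin, nsmul_eq_mul]
      ring
    rw [e]
    exact Finset.sum_le_sum fun l _ => hstrong l u v
  have hlip_h : ∀ u v, ‖gradient h u - gradient h v‖ ≤ ((n:ℝ) * L) * ‖u - v‖ := by
    intro u v
    rw [hgrad, hgrad, ← Finset.sum_sub_distrib]
    refine (norm_sum_le _ _).trans ?_
    have e : ((n:ℝ) * L) * ‖u - v‖ = ∑ _l : Fin n, L * ‖u - v‖ := by
      rw [Finset.sum_const, Finset.card_univ, Fintype.card_fin, nsmul_eq_mul]
      ring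
    rw [e]
    exact Finset.sum_le_sum fun l _ => hsmooth l u v
  have hMc : ∀ a b, ⟪gradient h a - gradient h b, a - b⟫ ≤ ((n:ℝ) * L) * ‖a - b‖ ^ 2 := by
    intro a b
    calc ⟪gradient h a - gradient h b, a - b⟫ ≤ ‖gradient h a - gradient h b‖ * ‖a - b‖ :=
          real_inner_le_norm _ _
      _ ≤ ((n:ℝ) * L) * ‖a - b‖ * ‖a - b‖ :=
          mul_le_mul_of_nonneg_right (hlip_h a b) (norm_nonneg _)
      _ = ((n:ℝ) * L) * ‖a - b‖ ^ 2 := by ring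
  have hhF : ∀ v, h v = (n:ℝ) * F v := by
    intro v
    rw [hF]
    simp only [hh]
    field_simp
  -- first-order optimality
  have hopt : ∀ u ∈ X, 0 ≤ ⟪gradient h xs, u - xs⟫ := by
    intro u hu
    by_contra hneg
    push_neg at hneg
    set A := ⟪gradient h xs, u - xs⟫ with hA
    set Cq := ((n:ℝ) * L) / 2 * ‖u - xs‖ ^ 2 with hCq
    have hCq0 : 0 ≤ Cq := by rw [hCq]; positivity
    have step : ∀ t : ℝ, 0 < t → t ≤ 1 → 0 ≤ A + t * Cq := by
      intro t ht0 ht1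
      have hb : xs + t • (u - xs) ∈ X := by
        have hmem := hXconvex hxsmem hu (by linarith : (0:ℝ) ≤ 1 - t) (le_of_lt ht0)
          (by ring)
        have : (1 - t) • xs + t • u = xs + t • (u - xs) := by module
        rwa [this] at hmem
      have hup := my_upper_quad h hdh ((n:ℝ) * L) hMc xs (xs + t • (u - xs))
      have hbxs : xs + t • (u - xs) - xs = t • (u - xs) := by abel
      rw [hbxs] at hup
      rw [real_inner_smul_right, norm_smul, mul_pow, Real.norm_eq_abs, sq_abs] at hup
      have hmin : h xs ≤ h (xs + t • (u - xs)) := by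
        rw [hhF, hhF]
        exact mul_le_mul_of_nonneg_left (hxsmin _ hb) (le_of_lt hn0)
      have h5 : 0 ≤ t * (A + t * Cq) := by nlinarith [hup, hmin]
      by_contra h6
      push_neg at h6
      nlinarith [h5, mul_pos ht0 (by linarith : 0 < -(A + t * Cq))]
    rcases eq_or_lt_of_le hCq0 with hC0 | hC0
    · have := step 1 one_pos le_rfl
      rw [← hC0] at this
      linarith
    · have ht0 : 0 < min 1 (-A / (2 * Cq)) := by
        apply lt_min one_pos
        apply div_pos (by linarith) (by linarith)
      have ht1 : min 1 (-A / (2 * Cq)) ≤ 1 := min_le_left _ _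
      have hstep := step _ ht0 ht1
      have htle : min 1 (-A / (2 * Cq)) ≤ -A / (2 * Cq) := min_le_right _ _
      have hmul2 : min 1 (-A / (2 * Cq)) * Cq ≤ (-A / (2 * Cq)) * Cq :=
        mul_le_mul_of_nonneg_right htle (le_of_lt hC0)
      have hval : (-A / (2 * Cq)) * Cq = -A / 2 := by
        field_simp
      linarith [hstep, hmul2, hval, hneg]
  -- fixed point of the projection
  have hfixpt : ∀ i : Fin n, P (xs - (η * π i) • gradient h xs) = xs := by
    intro i
    apply my_fix X hXconvex P hPmem hPproj xs hxsmem
    intro u hu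
    have e : xs - (η * π i) • gradient h xs - xs = -((η * π i) • gradient h xs) := by abel
    rw [e, inner_neg_left, real_inner_smul_left]
    have : 0 ≤ (η * π i) * ⟪gradient h xs, u - xs⟫ :=
      mul_nonneg (mul_nonneg (le_of_lt hη0) (le_of_lt (hπpos i))) (hopt u hu)
    linarith
  -- q facts
  set q := qmax π μ η lam with hqdef
  have hqle : ∀ i, 1 - lam * (η * (n:ℝ) * π i) * μ ≤ q := by
    intro i
    rw [hqdef]
    simp only [qmax]
    exact Finset.le_sup' (fun i => 1 - lam * (η * (n:ℝ) * π i) * μ) (Finset.mem_univ i)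
  have hq0 : 0 ≤ q := by
    have i0 : Fin n := ⟨0, Nat.pos_of_ne_zero (NeZero.ne n)⟩
    refine le_trans ?_ (hqle i0)
    have t1 : 0 ≤ η * (n:ℝ) := by positivity
    have t2 : η * (n:ℝ) * π i0 ≤ η * (n:ℝ) := mul_le_of_le_one_right t1 (hπle1 i0)
    have t3 : lam * (η * (n:ℝ) * π i0) ≤ η * (n:ℝ) :=
      le_trans (mul_le_of_le_one_left (mul_nonneg t1 (hπpos i0).le) hlam1) t2
    have t4 : lam * (η * (n:ℝ) * π i0) * μ ≤ η * (n:ℝ) * μ :=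
      mul_le_mul_of_nonneg_right t3 hμ.le
    have t5 : η * (n:ℝ) * μ ≤ η * (n:ℝ) * L := mul_le_mul_of_nonneg_left hμL t1
    have t6 : η * (n:ℝ) * L = η * ((n:ℝ) * L) := by ring
    linarith [hηnL]
  -- pointwise bound on the z's
  set Af : Fin n → ℝ := fun j => q * ‖x j - xs‖ with hAf
  set Bf : Fin n → ℝ := fun j => (η * lam * L) * (π j * ∑ l, ‖x l - x j‖) with hBf
  set Cf : Fin n → ℝ := fun j => (η * lam) * (π j * ‖(π j)⁻¹ • y j - ∑ l, y l‖) with hCf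
  have key2 : ∀ j, ‖z j - xs‖ ≤ Af j + Bf j + Cf j := by
    intro j
    have hπj0 : π j ≠ 0 := (hπpos j).ne'
    set e := (π j)⁻¹ • y j - ∑ l, y l with he
    set Δ := (∑ l, gradient (f l) (x l)) - gradient h (x j) with hΔdef
    have hyj : η • y j = (η * π j) • e + (η * π j) • gradient h (x j) + (η * π j) • Δ := by
      rw [← smul_add, ← smul_add]
      have h2 : e + gradient h (x j) + Δ = (π j)⁻¹ • y j := by
        rw [he, hΔdef, htrack]
        abel
      rw [h2, smul_smul]
      congr 1
      field_simp
    have hcid : (x j - η • y j) - (xs - (η * π j) • gradient h xs)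
        = ((x j - xs) - (η * π j) • (gradient h (x j) - gradient h xs))
          - (η * π j) • Δ - (η * π j) • e := by
      rw [hyj]
      module
    have hsb : (η * π j) * (((n:ℝ) * μ) + ((n:ℝ) * L)) ≤ 2 := by
      have b1 : η * π j ≤ η := mul_le_of_le_one_right hη0.le (hπle1 j)
      have b2 : (n:ℝ) * μ + (n:ℝ) * L ≤ 2 * ((n:ℝ) * L) := by nlinarith [hn0, hμL]
      have b3 : (η * π j) * (((n:ℝ) * μ) + ((n:ℝ) * L)) ≤ η * (2 * ((n:ℝ) * L)) :=
        mul_le_mul b1 b2 (by positivity) hη0.le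
      nlinarith [b3, hηnL]
    have hcontr := my_contraction h hdh ((n:ℝ) * μ) ((n:ℝ) * L) (by positivity)
      (mul_le_mul_of_nonneg_left hμL hn0.le) hmono_h hlip_h (η * π j)
      (mul_nonneg hη0.le (hπpos j).le) hsb (x j) xs
    have hPxs : ‖P (x j - η • y j) - xs‖
        ≤ ‖(x j - η • y j) - (xs - (η * π j) • gradient h xs)‖ := by
      conv_lhs => rw [← hfixpt j]
      exact my_nonexp X hXconvex P hPmem hPproj _ _
    have hΔn : ‖Δ‖ ≤ L * ∑ l, ‖x l - x j‖ := by
      have hΔe : Δ = ∑ l, (gradient (f l) (x l) - gradient (f l) (x j)) := by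
        rw [hΔdef, hgrad (x j), ← Finset.sum_sub_distrib]
      rw [hΔe]
      refine (norm_sum_le _ _).trans ?_
      rw [Finset.mul_sum]
      exact Finset.sum_le_sum fun l _ => hsmooth l _ _
    have hsmul : ∀ v : EuclideanSpace ℝ (Fin d), ‖(η * π j) • v‖ = (η * π j) * ‖v‖ := by
      intro v
      rw [norm_smul, Real.norm_eq_abs, abs_of_nonneg (mul_nonneg hη0.le (hπpos j).le)]
    have hPc2 : ‖P (x j - η • y j) - xs‖
        ≤ (1 - (η * π j) * ((n:ℝ) * μ)) * ‖x j - xs‖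
          + (η * π j) * ‖Δ‖ + (η * π j) * ‖e‖ := by
      refine hPxs.trans ?_
      rw [hcid]
      calc ‖(((x j - xs) - (η * π j) • (gradient h (x j) - gradient h xs))
              - (η * π j) • Δ) - (η * π j) • e‖
          ≤ ‖((x j - xs) - (η * π j) • (gradient h (x j) - gradient h xs))
              - (η * π j) • Δ‖ + ‖(η * π j) • e‖ := norm_sub_le _ _
        _ ≤ ‖(x j - xs) - (η * π j) • (gradient h (x j) - gradient h xs)‖
              + ‖(η * π j) • Δ‖ + ‖(η * π j) • e‖ := by
            linarith [norm_sub_le ((x j - xs) - (η * π j) • (gradient h (x j) - gradient h xs))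
              ((η * π j) • Δ)]
        _ ≤ (1 - (η * π j) * ((n:ℝ) * μ)) * ‖x j - xs‖
              + (η * π j) * ‖Δ‖ + (η * π j) * ‖e‖ := by
            rw [hsmul, hsmul]
            linarith [hcontr]
    have hzj : z j - xs = (1 - lam) • (x j - xs) + lam • (P (x j - η • y j) - xs) := by
      rw [hz j]
      module
    have hzn : ‖z j - xs‖ ≤ (1 - lam) * ‖x j - xs‖ + lam * ‖P (x j - η • y j) - xs‖ := by
      rw [hzj]
      refine (norm_add_le _ _).trans ?_
      rw [norm_smul, norm_smul, Real.norm_eq_abs, Real.norm_eq_abs,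
        abs_of_nonneg (by linarith : (0:ℝ) ≤ 1 - lam), abs_of_nonneg hlam0.le]
    have hc1 : (1 - lam * (η * (n:ℝ) * π j) * μ) * ‖x j - xs‖ ≤ q * ‖x j - xs‖ :=
      mul_le_mul_of_nonneg_right (hqle j) (norm_nonneg _)
    have hc2 : (η * lam) * (π j * ‖Δ‖) ≤ (η * lam * L) * (π j * ∑ l, ‖x l - x j‖) := by
      have := mul_le_mul_of_nonneg_left hΔn (mul_nonneg (mul_nonneg hη0.le hlam0.le)
        (hπpos j).le)
      nlinarith [this]
    have hmul := mul_le_mul_of_nonneg_left hPc2 hlam0.le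
    simp only [hAf, hBf, hCf]
    nlinarith [hzn, hmul, hc1, hc2, norm_nonneg (x j - xs), hμ, hπpos j]
  -- consensus step
  have hzsum : ∑ i, φ' i * ‖xplus i - xs‖ ^ 2 ≤ ∑ j, φ j * ‖z j - xs‖ ^ 2 := by
    have hper : ∀ i, ‖xplus i - xs‖ ^ 2 ≤ ∑ j, R i j * ‖z j - xs‖ ^ 2 := by
      intro i
      have hxv : xplus i - xs = ∑ j, R i j • (z j - xs) := by
        rw [hxplus i]
        have h1 : ∑ j, R i j • (z j - xs) = (∑ j, R i j • z j) - ∑ j, R i j • xs := by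
          rw [← Finset.sum_sub_distrib]
          exact Finset.sum_congr rfl fun j _ => smul_sub _ _ _
        rw [h1, ← Finset.sum_smul, hRrow i, one_smul]
      have h1 : ‖xplus i - xs‖ ≤ ∑ j, R i j * ‖z j - xs‖ := by
        rw [hxv]
        refine (norm_sum_le _ _).trans ?_
        refine Finset.sum_le_sum fun j _ => ?_
        rw [norm_smul, Real.norm_eq_abs, abs_of_nonneg (hRnonneg i j)]
      have h2 := my_jensen_sq Finset.univ (R i) (fun j => ‖z j - xs‖) (hRnonneg i) (hRrow i)
      calc ‖xplus i - xs‖ ^ 2 ≤ (∑ j, R i j * ‖z j - xs‖) ^ 2 :=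
            pow_le_pow_left₀ (norm_nonneg _) h1 2
        _ ≤ _ := h2
    calc ∑ i, φ' i * ‖xplus i - xs‖ ^ 2
        ≤ ∑ i, φ' i * ∑ j, R i j * ‖z j - xs‖ ^ 2 :=
          Finset.sum_le_sum fun i _ => mul_le_mul_of_nonneg_left (hper i) (hφ'pos i).le
      _ = ∑ j, φ j * ‖z j - xs‖ ^ 2 := by
          simp_rw [Finset.mul_sum]
          rw [Finset.sum_comm]
          refine Finset.sum_congr rfl fun j _ => ?_
          simp_rw [← mul_assoc]
          rw [← Finset.sum_mul, hφR j]
  have hABC : ∑ j, φ j * ‖z j - xs‖ ^ 2 ≤ ∑ j, φ j * ((Af j + Bf j) + Cf j) ^ 2 := by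
    refine Finset.sum_le_sum fun j _ => mul_le_mul_of_nonneg_left ?_ (hφpos j).le
    have := key2 j
    exact pow_le_pow_left₀ (norm_nonneg _) (by linarith) 2
  have hmink : Real.sqrt (∑ j, φ j * ((Af j + Bf j) + Cf j) ^ 2)
      ≤ Real.sqrt (∑ j, φ j * (Af j) ^ 2) + Real.sqrt (∑ j, φ j * (Bf j) ^ 2)
        + Real.sqrt (∑ j, φ j * (Cf j) ^ 2) := by
    have m1 := my_minkowski Finset.univ φ (fun j => Af j + Bf j) Cf (fun i => (hφpos i).le)
    have m2 := my_minkowski Finset.univ φ Af Bf (fun i => (hφpos i).le)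
    linarith [m1, m2]
  -- the A term
  have hAterm : Real.sqrt (∑ j, φ j * (Af j) ^ 2)
      = q * Real.sqrt (∑ i, φ i * ‖x i - xs‖ ^ 2) := by
    have e : ∑ j, φ j * (Af j) ^ 2 = q ^ 2 * ∑ i, φ i * ‖x i - xs‖ ^ 2 := by
      rw [Finset.mul_sum]
      refine Finset.sum_congr rfl fun j _ => ?_
      simp only [hAf]
      ring
    rw [e, Real.sqrt_mul (sq_nonneg q), Real.sqrt_sq hq0]
  -- the B term
  have hfmin_pos : 0 < fmin φ := by
    simp only [fmin]
    exact (Finset.lt_inf'_iff _).2 fun i _ => hφpos i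
  have hfmin_le : ∀ l, fmin φ ≤ φ l := by
    intro l
    simp only [fmin]
    exact Finset.inf'_le _ (Finset.mem_univ l)
  have hBterm : Real.sqrt (∑ j, φ j * (Bf j) ^ 2)
      ≤ η * lam * L * Real.sqrt ((n : ℝ) / fmin φ) * Derr φ x := by
    set DS := ∑ i, ∑ j, φ i * φ j * ‖x i - x j‖ ^ 2 with hDS
    have hDSnn : 0 ≤ DS := by
      rw [hDS]
      refine Finset.sum_nonneg fun i _ => Finset.sum_nonneg fun j _ => ?_
      exact mul_nonneg (mul_nonneg (hφpos i).le (hφpos j).le) (sq_nonneg _)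
    have hDS' : DS = ∑ j, ∑ l, φ j * φ l * ‖x l - x j‖ ^ 2 := by
      rw [hDS]
      refine Finset.sum_congr rfl fun i _ => Finset.sum_congr rfl fun j _ => ?_
      rw [norm_sub_rev]
    have hbound : ∑ j, φ j * (Bf j) ^ 2
        ≤ (η * lam * L) ^ 2 * ((n : ℝ) / fmin φ) * DS := by
      have step1 : ∀ j, φ j * (Bf j) ^ 2
          ≤ (η * lam * L) ^ 2 * (φ j * ((n : ℝ) * ∑ l, ‖x l - x j‖ ^ 2)) := by
        intro j
        simp only [hBf]
        have s1 : (∑ l, ‖x l - x j‖) ^ 2 ≤ (n : ℝ) * ∑ l, ‖x l - x j‖ ^ 2 := by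
          have := sq_sum_le_card_mul_sum_sq (s := Finset.univ) (f := fun l => ‖x l - x j‖)
          simpa using this
        have s2 : (π j) ^ 2 ≤ 1 := by nlinarith [hπle1 j, hπpos j]
        have s3 : (π j) ^ 2 * (∑ l, ‖x l - x j‖) ^ 2 ≤ (n : ℝ) * ∑ l, ‖x l - x j‖ ^ 2 := by
          nlinarith [s1, s2, sq_nonneg (∑ l, ‖x l - x j‖)]
        have expand : φ j * ((η * lam * L) * (π j * ∑ l, ‖x l - x j‖)) ^ 2
            = (η * lam * L) ^ 2 * (φ j * ((π j) ^ 2 * (∑ l, ‖x l - x j‖) ^ 2)) := by ring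
        rw [expand]
        exact mul_le_mul_of_nonneg_left
          (mul_le_mul_of_nonneg_left s3 (hφpos j).le) (sq_nonneg _)
      refine (Finset.sum_le_sum fun j _ => step1 j).trans ?_
      rw [← Finset.mul_sum,
        show (η * lam * L) ^ 2 * ((n : ℝ) / fmin φ) * DS
          = (η * lam * L) ^ 2 * (((n : ℝ) / fmin φ) * DS) by ring]
      refine mul_le_mul_of_nonneg_left ?_ (sq_nonneg _)
      have hcore : fmin φ * (∑ j, ∑ l, φ j * ‖x l - x j‖ ^ 2) ≤ DS := by
        rw [hDS', Finset.mul_sum]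
        refine Finset.sum_le_sum fun j _ => ?_
        rw [Finset.mul_sum]
        refine Finset.sum_le_sum fun l _ => ?_
        nlinarith [hfmin_le l, (hφpos j).le, sq_nonneg ‖x l - x j‖, hfmin_pos,
          mul_nonneg (mul_nonneg (hφpos j).le (sq_nonneg ‖x l - x j‖))
            (sub_nonneg.2 (hfmin_le l))]
      have hrewrite : ∑ j, φ j * ((n : ℝ) * ∑ l, ‖x l - x j‖ ^ 2)
          = (n : ℝ) * ∑ j, ∑ l, φ j * ‖x l - x j‖ ^ 2 := by
        simp_rw [Finset.mul_sum]
        exact Finset.sum_congr rfl fun j _ => Finset.sum_congr rfl fun l _ => by ring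
      rw [hrewrite]
      have hmulc := mul_le_mul_of_nonneg_left hcore
        (div_nonneg hn0.le hfmin_pos.le)
      have heq : (n : ℝ) / fmin φ * (fmin φ * (∑ j, ∑ l, φ j * ‖x l - x j‖ ^ 2))
          = (n : ℝ) * ∑ j, ∑ l, φ j * ‖x l - x j‖ ^ 2 := by
        rw [← mul_assoc]
        congr 1
        field_simp
      rw [heq] at hmulc
      exact hmulc
    have hDerr : Derr φ x = Real.sqrt DS := by rw [Derr, hDS]
    calc Real.sqrt (∑ j, φ j * (Bf j) ^ 2)
        ≤ Real.sqrt ((η * lam * L) ^ 2 * ((n : ℝ) / fmin φ) * DS) :=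
          Real.sqrt_le_sqrt hbound
      _ = η * lam * L * Real.sqrt ((n : ℝ) / fmin φ) * Real.sqrt DS := by
          rw [Real.sqrt_mul (mul_nonneg (sq_nonneg _) (div_nonneg hn0.le hfmin_pos.le)),
            Real.sqrt_mul (sq_nonneg _), Real.sqrt_sq (by positivity)]
      _ = η * lam * L * Real.sqrt ((n : ℝ) / fmin φ) * Derr φ x := by rw [hDerr]
  -- the C term
  have hCterm : Real.sqrt (∑ j, φ j * (Cf j) ^ 2) ≤ η * lam * Serr π y := by
    set SS := ∑ i, π i * ‖(π i)⁻¹ • y i - ∑ l, y l‖ ^ 2 with hSS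
    have hSSnn : 0 ≤ SS := by
      rw [hSS]
      refine Finset.sum_nonneg fun i _ => mul_nonneg (hπpos i).le (sq_nonneg _)
    have hbound : ∑ j, φ j * (Cf j) ^ 2 ≤ (η * lam) ^ 2 * SS := by
      rw [hSS, Finset.mul_sum]
      refine Finset.sum_le_sum fun j _ => ?_
      simp only [hCf]
      have c1 : φ j * π j ≤ 1 := by nlinarith [hφle1 j, hπle1 j, (hφpos j).le, (hπpos j).le]
      have c2 : 0 ≤ ((η * lam) ^ 2 * (π j * ‖(π j)⁻¹ • y j - ∑ l, y l‖ ^ 2))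
          * (1 - φ j * π j) := by
        apply mul_nonneg
        · exact mul_nonneg (sq_nonneg _) (mul_nonneg (hπpos j).le (sq_nonneg _))
        · linarith
      nlinarith [c2]
    calc Real.sqrt (∑ j, φ j * (Cf j) ^ 2) ≤ Real.sqrt ((η * lam) ^ 2 * SS) :=
          Real.sqrt_le_sqrt hbound
      _ = η * lam * Real.sqrt SS := by
          rw [Real.sqrt_mul (sq_nonneg _), Real.sqrt_sq (by positivity)]
      _ = η * lam * Serr π y := by rw [Serr, hSS]
  -- final chain
  calc Real.sqrt (∑ i, φ' i * ‖xplus i - xs‖ ^ 2)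
      ≤ Real.sqrt (∑ j, φ j * ‖z j - xs‖ ^ 2) := Real.sqrt_le_sqrt hzsum
    _ ≤ Real.sqrt (∑ j, φ j * ((Af j + Bf j) + Cf j) ^ 2) := Real.sqrt_le_sqrt hABC
    _ ≤ Real.sqrt (∑ j, φ j * (Af j) ^ 2) + Real.sqrt (∑ j, φ j * (Bf j) ^ 2)
        + Real.sqrt (∑ j, φ j * (Cf j) ^ 2) := hmink
    _ ≤ q * Real.sqrt (∑ i, φ i * ‖x i - xs‖ ^ 2)
        + η * lam * L * Real.sqrt ((n : ℝ) / fmin φ) * Derr φ x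
        + η * lam * Serr π y := by
          rw [hAterm]
          linarith [hBterm, hCterm]
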